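/- Let L be a k-list-assignment of a graph G and let (A,B) be a partition of V(G) such that G[A] has an L-colouring with defect d'. If d ≤ d' and for every vertex v ∈ B we have (d+1)·deg_A(v) + deg_B(v) + 1 ≤ (d+1)·k, then G has an L-colouring with defect d'. -/

import Mathlib

/-- The monochromatic subgraph of `G` under colouring `φ`. -/
def SimpleGraph.monoSub {V : Type*} (G : SimpleGraph V) (φ : V → ℕ) : SimpleGraph V where
  Adj u v := G.Adj u v ∧ φ u = φ v
  symm := ⟨fun u v h => ⟨G.symm.symm _ _ h.1, h.2.symm⟩⟩
  loopless := ⟨fun v h => G.loopless.irrefl v h.1⟩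

/-- The colouring `φ` has defect at most `d`: every vertex has at most `d`
neighbours of its own colour. -/
def SimpleGraph.DefectLe {V : Type*} (G : SimpleGraph V) (φ : V → ℕ) (d : ℕ) : Prop :=
  ∀ v : V, {w : V | G.Adj v w ∧ φ w = φ v}.ncard ≤ d

/-- The colouring `φ` has clustering at most `c`: every connected component of
the monochromatic subgraph has at most `c` vertices. -/
def SimpleGraph.ClusterLe {V : Type*} (G : SimpleGraph V) (φ : V → ℕ) (c : ℕ) : Prop :=
  ∀ v : V, {w : V | (G.monoSub φ).Reachable v w}.ncard ≤ c

/-- Twice the number of edges of `G` inside the vertex set `s`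
(the number of ordered adjacent pairs in `s`). -/
noncomputable def SimpleGraph.degPairs {V : Type*} (G : SimpleGraph V) (s : Finset V) : ℕ :=
  {p : V × V | p.1 ∈ s ∧ p.2 ∈ s ∧ G.Adj p.1 p.2}.ncard

open Classical in
/-- A-neighbourhood as a finset. -/
noncomputable def NAf {V : Type*} [Fintype V] (G : SimpleGraph V) (A : Set V) (v : V) :
    Finset V := Finset.univ.filter (fun w => w ∈ A ∧ G.Adj v w)

open Classical in
/-- B-neighbourhood as a finset. -/
noncomputable def NBf {V : Type*} [Fintype V] (G : SimpleGraph V) (A : Set V) (v : V) :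
    Finset V := Finset.univ.filter (fun w => w ∉ A ∧ G.Adj v w)

open Classical in
/-- number of monochromatic B-neighbours of v. -/
noncomputable def mct {V : Type*} [Fintype V] (G : SimpleGraph V) (A : Set V) (ψ : V → ℕ)
    (v : V) : ℕ := ((NBf G A v).filter (fun w => ψ w = ψ v)).card

open Classical in
/-- potential: ordered monochromatic adjacent pairs in B. -/
noncomputable def pot {V : Type*} [Fintype V] (G : SimpleGraph V) (A : Set V) (ψ : V → ℕ) :
    ℕ := (Finset.univ.filter
      (fun p : V × V => p.1 ∉ A ∧ p.2 ∉ A ∧ G.Adj p.1 p.2 ∧ ψ p.1 = ψ p.2)).card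

lemma nbf_mem {V : Type*} [Fintype V] {G : SimpleGraph V} {A : Set V} {v w : V} :
    w ∈ NBf G A v ↔ w ∉ A ∧ G.Adj v w := by
  classical
  rw [NBf]
  simp

lemma exists_colour {V : Type*} [Fintype V] (G : SimpleGraph V) (A : Set V) (k d : ℕ)
    (L : V → Finset ℕ) (ψ : V → ℕ) (v : V)
    (hLv : k ≤ (L v).card)
    (hBv : (d + 1) * (NAf G A v).card + (NBf G A v).card + 1 ≤ (d + 1) * k) :
    ∃ c ∈ L v, (∀ w, w ∈ A → G.Adj v w → ψ w ≠ c) ∧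
      ((NBf G A v).filter (fun w => ψ w = c)).card ≤ d := by
  classical
  by_contra h
  push_neg at h
  set S := (NAf G A v).image ψ with hS
  have hSc : S.card ≤ (NAf G A v).card := Finset.card_image_le
  have hak : (NAf G A v).card < k := by
    by_contra hc
    push_neg at hc
    have := Nat.mul_le_mul_left (d + 1) hc
    omega
  have hTc : k - (NAf G A v).card ≤ (L v \ S).card := by
    have := Finset.le_card_sdiff S (L v)
    omega
  have hcnt : ∀ c ∈ L v \ S, d + 1 ≤ ((NBf G A v).filter (fun w => ψ w = c)).card := by
    intro c hc
    have hcL : c ∈ L v := (Finset.mem_sdiff.mp hc).1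
    have hcS : c ∉ S := (Finset.mem_sdiff.mp hc).2
    have havoid : ∀ w, w ∈ A → G.Adj v w → ψ w ≠ c := by
      intro w hw hadj heq
      refine hcS (Finset.mem_image.mpr ⟨w, ?_, heq⟩)
      rw [NAf]
      simp [hw, hadj]
    have := h c hcL havoid
    omega
  have hdisj : ∀ c1 ∈ L v \ S, ∀ c2 ∈ L v \ S, c1 ≠ c2 →
      Disjoint ((NBf G A v).filter (fun w => ψ w = c1))
        ((NBf G A v).filter (fun w => ψ w = c2)) := by
    intro c1 _ c2 _ hne
    rw [Finset.disjoint_left]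
    intro w h1 h2
    rw [Finset.mem_filter] at h1 h2
    exact hne (h1.2 ▸ h2.2 ▸ rfl)
  have hsum : (d + 1) * (L v \ S).card ≤ (NBf G A v).card := by
    calc (d + 1) * (L v \ S).card = ∑ _c ∈ L v \ S, (d + 1) := by simp [mul_comm]
    _ ≤ ∑ c ∈ L v \ S, ((NBf G A v).filter (fun w => ψ w = c)).card :=
        Finset.sum_le_sum hcnt
    _ = ((L v \ S).biUnion (fun c => (NBf G A v).filter (fun w => ψ w = c))).card :=
        (Finset.card_biUnion hdisj).symm
    _ ≤ (NBf G A v).card := by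
        apply Finset.card_le_card
        intro w hw
        obtain ⟨c, _, hwc⟩ := Finset.mem_biUnion.mp hw
        exact (Finset.mem_filter.mp hwc).1
  have key : (d + 1) * (k - (NAf G A v).card) + (d + 1) * (NAf G A v).card = (d + 1) * k := by
    rw [← Nat.mul_add, Nat.sub_add_cancel hak.le]
  have := Nat.mul_le_mul_left (d + 1) hTc
  omega

open Classical in
lemma pot_split {V : Type*} [Fintype V] (G : SimpleGraph V) (A : Set V) (ψ : V → ℕ) (v : V)
    (hv : v ∉ A) :
    pot G A ψ =
      (Finset.univ.filter (fun p : V × V =>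
        (p.1 ∉ A ∧ p.2 ∉ A ∧ G.Adj p.1 p.2 ∧ ψ p.1 = ψ p.2) ∧ p.1 ≠ v ∧ p.2 ≠ v)).card
      + mct G A ψ v + mct G A ψ v := by
  have h1 : (Finset.univ.filter (fun p : V × V =>
      (p.1 ∉ A ∧ p.2 ∉ A ∧ G.Adj p.1 p.2 ∧ ψ p.1 = ψ p.2) ∧ p.1 = v)) =
      ((NBf G A v).filter (fun w => ψ w = ψ v)).image (fun w => (v, w)) := by
    ext ⟨a, b⟩
    simp only [Finset.mem_filter, Finset.mem_univ, true_and, Finset.mem_image]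
    constructor
    · rintro ⟨⟨b1, b2, b3, b4⟩, b5⟩
      subst b5
      exact ⟨b, ⟨nbf_mem.mpr ⟨b2, b3⟩, b4.symm⟩, rfl⟩
    · rintro ⟨w, ⟨hw, heq⟩, hpair⟩
      injection hpair with e1 e2
      subst e1; subst e2
      obtain ⟨hwA, hadj⟩ := nbf_mem.mp hw
      exact ⟨⟨hv, hwA, hadj, heq.symm⟩, rfl⟩
  have h2 : (Finset.univ.filter (fun p : V × V =>
      ((p.1 ∉ A ∧ p.2 ∉ A ∧ G.Adj p.1 p.2 ∧ ψ p.1 = ψ p.2) ∧ ¬ p.1 = v) ∧ p.2 = v)) =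
      ((NBf G A v).filter (fun w => ψ w = ψ v)).image (fun w => (w, v)) := by
    ext ⟨a, b⟩
    simp only [Finset.mem_filter, Finset.mem_univ, true_and, Finset.mem_image]
    constructor
    · rintro ⟨⟨⟨b1, b2, b3, b4⟩, _⟩, b6⟩
      subst b6
      exact ⟨a, ⟨nbf_mem.mpr ⟨b1, b3.symm⟩, b4⟩, rfl⟩
    · rintro ⟨w, ⟨hw, heq⟩, hpair⟩
      injection hpair with e1 e2
      subst e1; subst e2
      obtain ⟨hwA, hadj⟩ := nbf_mem.mp hw
      exact ⟨⟨⟨hwA, hv, hadj.symm, heq⟩, hadj.ne'⟩, rfl⟩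
  have c1 : (Finset.univ.filter (fun p : V × V =>
      (p.1 ∉ A ∧ p.2 ∉ A ∧ G.Adj p.1 p.2 ∧ ψ p.1 = ψ p.2) ∧ p.1 = v)).card = mct G A ψ v := by
    rw [h1, mct]
    exact Finset.card_image_of_injective _ (fun a b hab => congrArg Prod.snd hab)
  have c2 : (Finset.univ.filter (fun p : V × V =>
      ((p.1 ∉ A ∧ p.2 ∉ A ∧ G.Adj p.1 p.2 ∧ ψ p.1 = ψ p.2) ∧ ¬ p.1 = v) ∧ p.2 = v)).card
      = mct G A ψ v := by
    rw [h2, mct]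
    exact Finset.card_image_of_injective _ (fun a b hab => congrArg Prod.fst hab)
  have s1 := Finset.card_filter_add_card_filter_not (s := Finset.univ.filter
      (fun p : V × V => p.1 ∉ A ∧ p.2 ∉ A ∧ G.Adj p.1 p.2 ∧ ψ p.1 = ψ p.2))
      (p := fun p : V × V => p.1 = v)
  have s2 := Finset.card_filter_add_card_filter_not (s := Finset.univ.filter
      (fun p : V × V => (p.1 ∉ A ∧ p.2 ∉ A ∧ G.Adj p.1 p.2 ∧ ψ p.1 = ψ p.2) ∧ ¬ p.1 = v))
      (p := fun p : V × V => p.2 = v)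
  rw [Finset.filter_filter, Finset.filter_filter] at s1
  rw [Finset.filter_filter, Finset.filter_filter] at s2
  rw [pot]
  rw [c1] at s1
  rw [c2] at s2
  have h3 : (Finset.univ.filter (fun p : V × V =>
      ((p.1 ∉ A ∧ p.2 ∉ A ∧ G.Adj p.1 p.2 ∧ ψ p.1 = ψ p.2) ∧ ¬ p.1 = v) ∧ ¬ p.2 = v)) =
      (Finset.univ.filter (fun p : V × V =>
      (p.1 ∉ A ∧ p.2 ∉ A ∧ G.Adj p.1 p.2 ∧ ψ p.1 = ψ p.2) ∧ p.1 ≠ v ∧ p.2 ≠ v)) := by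
    apply Finset.filter_congr
    intro p _
    tauto
  rw [h3] at s2
  omega

open Classical in
lemma pot_update {V : Type*} [Fintype V] (G : SimpleGraph V) (A : Set V)
    (ψ ψ'' : V → ℕ) (v : V) (c : ℕ) (hv : v ∉ A)
    (hagree : ∀ w, w ≠ v → ψ'' w = ψ w) (hc : ψ'' v = c) :
    pot G A ψ'' + mct G A ψ v + mct G A ψ v
      = pot G A ψ + ((NBf G A v).filter (fun w => ψ w = c)).card
        + ((NBf G A v).filter (fun w => ψ w = c)).card := by
  rw [pot_split G A ψ v hv, pot_split G A ψ'' v hv]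
  have h1 : (Finset.univ.filter (fun p : V × V =>
      (p.1 ∉ A ∧ p.2 ∉ A ∧ G.Adj p.1 p.2 ∧ ψ'' p.1 = ψ'' p.2) ∧ p.1 ≠ v ∧ p.2 ≠ v)) =
      (Finset.univ.filter (fun p : V × V =>
      (p.1 ∉ A ∧ p.2 ∉ A ∧ G.Adj p.1 p.2 ∧ ψ p.1 = ψ p.2) ∧ p.1 ≠ v ∧ p.2 ≠ v)) := by
    apply Finset.filter_congr
    intro p _
    constructor
    · rintro ⟨⟨a1, a2, a3, a4⟩, a5, a6⟩
      rw [hagree _ a5, hagree _ a6] at a4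
      exact ⟨⟨a1, a2, a3, a4⟩, a5, a6⟩
    · rintro ⟨⟨a1, a2, a3, a4⟩, a5, a6⟩
      refine ⟨⟨a1, a2, a3, ?_⟩, a5, a6⟩
      rw [hagree _ a5, hagree _ a6]
      exact a4
  have h2 : mct G A ψ'' v
      = ((NBf G A v).filter (fun w => ψ w = c)).card := by
    rw [mct]
    congr 1
    apply Finset.filter_congr
    intro w hw
    have hwv : w ≠ v := (G.ne_of_adj (nbf_mem.mp hw).2).symm
    rw [hagree _ hwv, hc]
  rw [h1, h2]
  omega

theorem stmt2 {V : Type*} [Fintype V] (G : SimpleGraph V) (k d d' : ℕ) (hdd' : d ≤ d')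
    (A : Set V) (L : V → Finset ℕ) (hL : ∀ v, k ≤ (L v).card)
    (hA : ∃ φ₀ : V → ℕ, (∀ v ∈ A, φ₀ v ∈ L v) ∧
      ∀ v ∈ A, {w : V | w ∈ A ∧ G.Adj v w ∧ φ₀ w = φ₀ v}.ncard ≤ d')
    (hB : ∀ v : V, v ∉ A →
      (d + 1) * {w : V | w ∈ A ∧ G.Adj v w}.ncard
        + {w : V | w ∉ A ∧ G.Adj v w}.ncard + 1 ≤ (d + 1) * k) :
    ∃ φ : V → ℕ, (∀ v, φ v ∈ L v) ∧ G.DefectLe φ d' := by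
  classical
  obtain ⟨φ₀, hφ₀L, hφ₀A⟩ := hA
  have hB' : ∀ v, v ∉ A →
      (d + 1) * (NAf G A v).card + (NBf G A v).card + 1 ≤ (d + 1) * k := by
    intro v hv
    have e1 : {w | w ∈ A ∧ G.Adj v w}.ncard = (NAf G A v).card := by
      rw [← Set.ncard_coe_finset]
      congr 1
      ext w
      rw [Finset.mem_coe, NAf]
      simp
    have e2 : {w | w ∉ A ∧ G.Adj v w}.ncard = (NBf G A v).card := by
      rw [← Set.ncard_coe_finset]
      congr 1
      ext w
      rw [Finset.mem_coe, nbf_mem]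
      simp
    have := hB v hv
    rw [e1, e2] at this
    exact this
  -- main recolouring induction
  have main : ∀ n (ψ : V → ℕ), (∀ u, ψ u ∈ L u) → (∀ u ∈ A, ψ u = φ₀ u) →
      (∀ u, u ∉ A → ∀ w ∈ A, G.Adj u w → ψ w ≠ ψ u) →
      pot G A ψ ≤ n → ∃ φ, (∀ u, φ u ∈ L u) ∧ G.DefectLe φ d' := by
    intro n
    induction n using Nat.strong_induction_on with
    | _ n ih =>
      intro ψ hψL hψA hψgood hpot
      by_cases hdone : ∀ u, u ∉ A → mct G A ψ u ≤ d
      · refine ⟨ψ, hψL, fun v => ?_⟩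
        by_cases hv : v ∈ A
        · have hsub : {w | G.Adj v w ∧ ψ w = ψ v} ⊆
              {w | w ∈ A ∧ G.Adj v w ∧ φ₀ w = φ₀ v} := by
            rintro w ⟨hadj, heq⟩
            by_cases hw : w ∈ A
            · exact ⟨hw, hadj, by rw [← hψA w hw, ← hψA v hv]; exact heq⟩
            · exact absurd heq.symm (hψgood w hw v hv (G.adj_symm hadj))
          exact le_trans (Set.ncard_le_ncard hsub (Set.toFinite _)) (hφ₀A v hv)
        · have hsub : {w | G.Adj v w ∧ ψ w = ψ v} ⊆
              {w | w ∉ A ∧ G.Adj v w ∧ ψ w = ψ v} := by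
            rintro w ⟨hadj, heq⟩
            by_cases hw : w ∈ A
            · exact absurd heq (hψgood v hv w hw hadj)
            · exact ⟨hw, hadj, heq⟩
          have e3 : {w | w ∉ A ∧ G.Adj v w ∧ ψ w = ψ v}.ncard = mct G A ψ v := by
            rw [mct, ← Set.ncard_coe_finset]
            congr 1
            ext w
            rw [Finset.mem_coe, Finset.mem_filter, nbf_mem]
            simp only [Set.mem_setOf_eq]
            tauto
          calc {w | G.Adj v w ∧ ψ w = ψ v}.ncard
              ≤ {w | w ∉ A ∧ G.Adj v w ∧ ψ w = ψ v}.ncard :=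
                Set.ncard_le_ncard hsub (Set.toFinite _)
            _ = mct G A ψ v := e3
            _ ≤ d := hdone v hv
            _ ≤ d' := hdd'
      · push_neg at hdone
        obtain ⟨v, hv, hbad⟩ := hdone
        obtain ⟨c, hcL, hcavoid, hccnt⟩ := exists_colour G A k d L ψ v (hL v) (hB' v hv)
        set ψ' := Function.update ψ v c with hψ'
        have hupd := pot_update G A ψ ψ' v c hv
          (fun w hwv => by rw [hψ', Function.update_of_ne hwv])
          (by rw [hψ', Function.update_self])
        have hdec : pot G A ψ' < pot G A ψ := by
          have hb : d + 1 ≤ mct G A ψ v := hbad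
          omega
        apply ih (pot G A ψ') (lt_of_lt_of_le hdec hpot) ψ'
        · intro u
          by_cases hu : u = v
          · subst hu; rw [hψ', Function.update_self]; exact hcL
          · rw [hψ', Function.update_of_ne hu]; exact hψL u
        · intro u hu
          have huv : u ≠ v := fun h => hv (h ▸ hu)
          rw [hψ', Function.update_of_ne huv]
          exact hψA u hu
        · intro u hu w hw hadj
          have hwv : w ≠ v := fun h => hv (h ▸ hw)
          rw [hψ', Function.update_of_ne hwv]
          by_cases huv : u = v
          · subst huv
            rw [Function.update_self]
            exact hcavoid w hw hadj
          · rw [Function.update_of_ne huv]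
            exact hψgood u hu w hw hadj
        · exact le_refl _
  -- initial colouring
  have hinit : ∀ v, v ∉ A → ∃ c ∈ L v, ∀ w, w ∈ A → G.Adj v w → φ₀ w ≠ c := by
    intro v hv
    obtain ⟨c, h1, h2, _⟩ := exists_colour G A k d L φ₀ v (hL v) (hB' v hv)
    exact ⟨c, h1, h2⟩
  choose g hg1 hg2 using hinit
  set ψ₁ : V → ℕ := fun v => if hv : v ∈ A then φ₀ v else g v hv with hψ₁
  apply main (pot G A ψ₁) ψ₁
  · intro u
    by_cases hu : u ∈ A
    · simp only [hψ₁, dif_pos hu]; exact hφ₀L u hu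
    · simp only [hψ₁, dif_neg hu]; exact hg1 u hu
  · intro u hu
    simp only [hψ₁, dif_pos hu]
  · intro u hu w hw hadj
    simp only [hψ₁, dif_neg hu, dif_pos hw]
    exact hg2 u hu w hw hadj
  · exact le_refl _
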